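/- Let γ' > γ > p ≥ 0 with γ + γ' > 1, and let X be γ-regular and h be γ'-regular in the sense of finite partition-controls W_{X,γ,p} and W_{h,γ',p}. Then the first-level control of the sum satisfies W_{X+h, γ, p}(s,t) ≲ W_{X,γ,p}(s,t) + W_{h,γ',p}(s,t)^{(γ'-p)/(γ-p)} for every subinterval [s,t] ⊆ [0,T]. -/

import Mathlib

open scoped ENNReal

/-- The partition sum `∑_k |g(τ_k, τ_{k+1})|^e / (τ_{k+1} - τ_k)^q`. -/
noncomputable def pSum (g : ℝ → ℝ → ℝ) (e q : ℝ) (m : ℕ) (τ : ℕ → ℝ) : ℝ :=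
  ∑ k ∈ Finset.range m, |g (τ k) (τ (k + 1))| ^ e / (τ (k + 1) - τ k) ^ q

/-- The partition-supremum control of a two-parameter function `g` over `[s,t]`. -/
noncomputable def pCtrl (g : ℝ → ℝ → ℝ) (e q s t : ℝ) : ℝ≥0∞ :=
  ⨆ (m : ℕ) (τ : ℕ → ℝ)
    (_ : τ 0 = s ∧ τ m = t ∧ ∀ k < m, τ k < τ (k + 1)),
    ENNReal.ofReal (pSum g e q m τ)

private lemma aux_rpow_add (x y α : ℝ) (hx : 0 ≤ x) (hy : 0 ≤ y) (hα : 1 ≤ α) :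
    x^α + y^α ≤ (x+y)^α := by
  have hα0 : (0:ℝ) < α := by linarith
  have h := NNReal.rpow_add_rpow_le_add (⟨x,hx⟩) (⟨y,hy⟩) hα
  have h' : ((x^α + y^α)^(1/α) : ℝ) ≤ x + y := by exact_mod_cast h
  have h2 := Real.rpow_le_rpow (Real.rpow_nonneg (by positivity) _) h' hα0.le
  rwa [← Real.rpow_mul (by positivity), one_div_mul_cancel hα0.ne', Real.rpow_one] at h2

private lemma aux_sum_rpow (f : ℕ → ℝ) (α : ℝ) (hα : 1 ≤ α) :
    ∀ m : ℕ, (∀ k < m, 0 ≤ f k) →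
      ∑ k ∈ Finset.range m, (f k) ^ α ≤ (∑ k ∈ Finset.range m, f k) ^ α := by
  intro m
  induction m with
  | zero => intro _; simp [Real.zero_rpow (by linarith : α ≠ 0)]
  | succ n ih =>
    intro hf
    rw [Finset.sum_range_succ, Finset.sum_range_succ]
    refine le_trans (add_le_add_left (ih fun k hk => hf k (by omega)) _) ?_
    exact aux_rpow_add _ _ _
      (Finset.sum_nonneg fun k hk => hf k (by
        have := Finset.mem_range.mp hk; omega)) (hf n (by omega)) hα

private lemma aux_two_rpow (a b e : ℝ) (ha : 0 ≤ a) (hb : 0 ≤ b) (he : 0 ≤ e) :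
    (a + b) ^ e ≤ 2 ^ e * (a ^ e + b ^ e) := by
  have h2 : (0:ℝ) ≤ (2:ℝ) ^ e := Real.rpow_nonneg (by norm_num) e
  rcases le_total a b with hab | hab
  · calc (a+b)^e ≤ (2*b)^e := Real.rpow_le_rpow (by positivity) (by linarith) he
      _ = 2^e * b^e := Real.mul_rpow (by norm_num) hb
      _ ≤ 2^e * (a^e + b^e) :=
        mul_le_mul_of_nonneg_left (le_add_of_nonneg_left (Real.rpow_nonneg ha e)) h2
  · calc (a+b)^e ≤ (2*a)^e := Real.rpow_le_rpow (by positivity) (by linarith) he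
      _ = 2^e * a^e := Real.mul_rpow (by norm_num) ha
      _ ≤ 2^e * (a^e + b^e) :=
        mul_le_mul_of_nonneg_left (le_add_of_nonneg_right (Real.rpow_nonneg hb e)) h2

theorem ctrl_sum_of_paths {V : Type*} [NormedAddCommGroup V]
    (X h : ℝ → V) (γ γ' p T : ℝ)
    (hp0 : 0 ≤ p) (hpγ : p < γ) (hγγ' : γ < γ') (hyoung : 1 < γ + γ')
    (hXfin : pCtrl (fun u v => ‖X v - X u‖) (1 / (γ - p)) (p / (γ - p)) 0 T ≠ ⊤)
    (hhfin : pCtrl (fun u v => ‖h v - h u‖) (1 / (γ' - p)) (p / (γ' - p)) 0 T ≠ ⊤) :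
    ∃ C : ℝ, 0 < C ∧ ∀ s t : ℝ, 0 ≤ s → s ≤ t → t ≤ T →
      pCtrl (fun u v => ‖(X v + h v) - (X u + h u)‖) (1 / (γ - p)) (p / (γ - p)) s t ≤
        ENNReal.ofReal C *
          (pCtrl (fun u v => ‖X v - X u‖) (1 / (γ - p)) (p / (γ - p)) s t +
            (pCtrl (fun u v => ‖h v - h u‖) (1 / (γ' - p)) (p / (γ' - p)) s t) ^
              ((γ' - p) / (γ - p))) := by
  have hdpos : 0 < γ - p := by linarith
  have hd'pos : 0 < γ' - p := by linarith
  have hdd' : γ - p < γ' - p := by linarith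
  set e : ℝ := 1 / (γ - p) with hedef
  set q : ℝ := p / (γ - p) with hqdef
  set e' : ℝ := 1 / (γ' - p) with he'def
  set q' : ℝ := p / (γ' - p) with hq'def
  set α : ℝ := (γ' - p) / (γ - p) with hαdef
  have hα1 : 1 ≤ α := (one_le_div hdpos).mpr hdd'.le
  have hα0 : 0 ≤ α := by linarith
  have he0 : 0 ≤ e := by positivity
  have heα : e' * α = e := by rw [he'def, hedef, hαdef]; field_simp
  have hqα : q' * α = q := by rw [hq'def, hqdef, hαdef]; field_simp
  have h2e : (0:ℝ) < 2 ^ e := Real.rpow_pos_of_pos (by norm_num) e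
  refine ⟨2 ^ e, h2e, fun s t _ _ _ => ?_⟩
  rw [pCtrl]
  refine iSup_le fun m => iSup_le fun τ => iSup_le fun hπ => ?_
  obtain ⟨hτ0, hτm, hmono⟩ := hπ
  have hΔ : ∀ k < m, (0:ℝ) < τ (k+1) - τ k := fun k hk => sub_pos.mpr (hmono k hk)
  have hA : 0 ≤ pSum (fun u v => ‖X v - X u‖) e q m τ :=
    Finset.sum_nonneg fun k hk => by
      have := hΔ k (Finset.mem_range.mp hk); positivity
  have hB : 0 ≤ pSum (fun u v => ‖h v - h u‖) e' q' m τ :=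
    Finset.sum_nonneg fun k hk => by
      have := hΔ k (Finset.mem_range.mp hk); positivity
  -- Step 1: triangle inequality + (a+b)^e ≤ 2^e (a^e + b^e)
  have step1 : pSum (fun u v => ‖(X v + h v) - (X u + h u)‖) e q m τ ≤
      2 ^ e * (pSum (fun u v => ‖X v - X u‖) e q m τ +
        pSum (fun u v => ‖h v - h u‖) e q m τ) := by
    rw [pSum, pSum, pSum, ← Finset.sum_add_distrib, Finset.mul_sum]
    refine Finset.sum_le_sum fun k hk => ?_
    have hΔk := hΔ k (Finset.mem_range.mp hk)
    have hΔq : (0:ℝ) < (τ (k+1) - τ k) ^ q := Real.rpow_pos_of_pos hΔk q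
    rw [← add_div, ← mul_div_assoc, div_le_div_iff_of_pos_right hΔq]
    have htri : ‖(X (τ (k+1)) + h (τ (k+1))) - (X (τ k) + h (τ k))‖ ≤
        ‖X (τ (k+1)) - X (τ k)‖ + ‖h (τ (k+1)) - h (τ k)‖ := by
      have heq2 : (X (τ (k+1)) + h (τ (k+1))) - (X (τ k) + h (τ k)) =
          (X (τ (k+1)) - X (τ k)) + (h (τ (k+1)) - h (τ k)) := by abel
      rw [heq2]; exact norm_add_le _ _
    calc |‖(X (τ (k+1)) + h (τ (k+1))) - (X (τ k) + h (τ k))‖| ^ e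
        = ‖(X (τ (k+1)) + h (τ (k+1))) - (X (τ k) + h (τ k))‖ ^ e := by rw [abs_norm]
      _ ≤ (‖X (τ (k+1)) - X (τ k)‖ + ‖h (τ (k+1)) - h (τ k)‖) ^ e :=
          Real.rpow_le_rpow (norm_nonneg _) htri he0
      _ ≤ 2 ^ e * (‖X (τ (k+1)) - X (τ k)‖ ^ e + ‖h (τ (k+1)) - h (τ k)‖ ^ e) :=
          aux_two_rpow _ _ _ (norm_nonneg _) (norm_nonneg _) he0
      _ = 2 ^ e * (|‖X (τ (k+1)) - X (τ k)‖| ^ e + |‖h (τ (k+1)) - h (τ k)‖| ^ e) := by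
          rw [abs_norm, abs_norm]
  -- Step 2: ℓ^p embedding for h
  have step2 : pSum (fun u v => ‖h v - h u‖) e q m τ ≤
      (pSum (fun u v => ‖h v - h u‖) e' q' m τ) ^ α := by
    have heq : pSum (fun u v => ‖h v - h u‖) e q m τ =
        ∑ k ∈ Finset.range m,
          (|‖h (τ (k+1)) - h (τ k)‖| ^ e' / (τ (k+1) - τ k) ^ q') ^ α := by
      rw [pSum]
      refine Finset.sum_congr rfl fun k hk => ?_
      have hΔk := hΔ k (Finset.mem_range.mp hk)
      rw [Real.div_rpow (Real.rpow_nonneg (abs_nonneg _) _) (Real.rpow_nonneg hΔk.le _),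
        ← Real.rpow_mul (abs_nonneg _), ← Real.rpow_mul hΔk.le, heα, hqα]
    rw [heq, pSum]
    refine aux_sum_rpow _ α hα1 m fun k hk => ?_
    have := hΔ k hk
    positivity
  -- combine in ℝ
  have key : pSum (fun u v => ‖(X v + h v) - (X u + h u)‖) e q m τ ≤
      2 ^ e * (pSum (fun u v => ‖X v - X u‖) e q m τ +
        (pSum (fun u v => ‖h v - h u‖) e' q' m τ) ^ α) :=
    le_trans step1 (mul_le_mul_of_nonneg_left (add_le_add_right step2 _) h2e.le)
  -- pass to ENNReal and bound by the controls
  have hAle : ENNReal.ofReal (pSum (fun u v => ‖X v - X u‖) e q m τ) ≤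
      pCtrl (fun u v => ‖X v - X u‖) e q s t := by
    rw [pCtrl]
    exact le_iSup_of_le m (le_iSup_of_le τ (le_iSup_of_le ⟨hτ0, hτm, hmono⟩ le_rfl))
  have hBle : ENNReal.ofReal (pSum (fun u v => ‖h v - h u‖) e' q' m τ) ≤
      pCtrl (fun u v => ‖h v - h u‖) e' q' s t := by
    rw [pCtrl]
    exact le_iSup_of_le m (le_iSup_of_le τ (le_iSup_of_le ⟨hτ0, hτm, hmono⟩ le_rfl))
  calc ENNReal.ofReal (pSum (fun u v => ‖(X v + h v) - (X u + h u)‖) e q m τ)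
      ≤ ENNReal.ofReal (2 ^ e * (pSum (fun u v => ‖X v - X u‖) e q m τ +
          (pSum (fun u v => ‖h v - h u‖) e' q' m τ) ^ α)) :=
        ENNReal.ofReal_le_ofReal key
    _ = ENNReal.ofReal (2 ^ e) *
          (ENNReal.ofReal (pSum (fun u v => ‖X v - X u‖) e q m τ) +
            ENNReal.ofReal (pSum (fun u v => ‖h v - h u‖) e' q' m τ) ^ α) := by
        rw [ENNReal.ofReal_mul h2e.le, ENNReal.ofReal_add hA (Real.rpow_nonneg hB α),
          ENNReal.ofReal_rpow_of_nonneg hB hα0]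
    _ ≤ ENNReal.ofReal (2 ^ e) *
          (pCtrl (fun u v => ‖X v - X u‖) e q s t +
            pCtrl (fun u v => ‖h v - h u‖) e' q' s t ^ α) := by
        exact mul_le_mul_right (add_le_add hAle (ENNReal.rpow_le_rpow hBle hα0)) _
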